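/- Suppose S ⊆ ℝ² is Lebesgue measurable and for every ρ ∈ O(2), Σ_{n∈ℤ} 1_S(x − ρ(n,0)) = 1 for almost all x ∈ ℝ². Then for every ρ ∈ O(2), for almost every line L parallel to ρ(ℝ×{0}), the one-dimensional Lebesgue measure of S ∩ L equals 1. -/

import Mathlib

open MeasureTheory

/-- If a measurable `S ⊆ ℝ²` tiles the plane (a.e.) by translates along every rotated copy of
`ℤ × {0}`, then for every rotation `ρ` and almost every line parallel to `ρ(ℝ × {0})`,
the one-dimensional measure of `S` on that line equals `1`. -/
theorem steinhaus_for_Z_implies_lines_measure_one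
    (S : Set (EuclideanSpace ℝ (Fin 2))) (hS : MeasurableSet S)
    (htile : ∀ ρ : EuclideanSpace ℝ (Fin 2) ≃ₗᵢ[ℝ] EuclideanSpace ℝ (Fin 2),
      ∀ᵐ x : EuclideanSpace ℝ (Fin 2),
        ∑' n : ℤ, S.indicator (fun _ => (1 : ℝ))
          (x - ρ ((n : ℝ) • EuclideanSpace.single (0 : Fin 2) (1 : ℝ))) = 1) :
    ∀ ρ : EuclideanSpace ℝ (Fin 2) ≃ₗᵢ[ℝ] EuclideanSpace ℝ (Fin 2),
      ∀ᵐ t : ℝ, volume {s : ℝ |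
        ρ (s • EuclideanSpace.single (0 : Fin 2) (1 : ℝ)
          + t • EuclideanSpace.single (1 : Fin 2) (1 : ℝ)) ∈ S} = 1 := by
  intro ρ
  set e0 : EuclideanSpace ℝ (Fin 2) := EuclideanSpace.single (0 : Fin 2) (1 : ℝ) with he0
  set e1 : EuclideanSpace ℝ (Fin 2) := EuclideanSpace.single (1 : Fin 2) (1 : ℝ) with he1
  -- Step 1: ENNReal version of the tiling hypothesis
  have htileE : ∀ᵐ x : EuclideanSpace ℝ (Fin 2),
      ∑' n : ℤ, S.indicator (fun _ => (1 : ENNReal)) (x - ρ ((n : ℝ) • e0)) = 1 := by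
    filter_upwards [htile ρ] with x hx
    have hsumm : Summable (fun n : ℤ => S.indicator (fun _ => (1 : ℝ)) (x - ρ ((n : ℝ) • e0))) := by
      by_contra h
      rw [tsum_eq_zero_of_not_summable h] at hx
      norm_num at hx
    calc ∑' n : ℤ, S.indicator (fun _ => (1 : ENNReal)) (x - ρ ((n : ℝ) • e0))
        = ∑' n : ℤ, ENNReal.ofReal (S.indicator (fun _ => (1 : ℝ)) (x - ρ ((n : ℝ) • e0))) := by
          refine tsum_congr fun n => ?_
          by_cases h : (x - ρ ((n : ℝ) • e0)) ∈ S
          · rw [Set.indicator_of_mem h, Set.indicator_of_mem h, ENNReal.ofReal_one]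
          · rw [Set.indicator_of_notMem h, Set.indicator_of_notMem h, ENNReal.ofReal_zero]
      _ = ENNReal.ofReal (∑' n : ℤ, S.indicator (fun _ => (1 : ℝ)) (x - ρ ((n : ℝ) • e0))) :=
          (ENNReal.ofReal_tsum_of_nonneg
            (fun n => Set.indicator_nonneg (fun _ _ => zero_le_one) _) hsumm).symm
      _ = 1 := by rw [hx]; simp
  -- Step 2: the map ψ (t, s) = ρ (s • e0 + t • e1) is measure preserving
  have hmp : MeasurePreserving (fun p : ℝ × ℝ => ρ (p.2 • e0 + p.1 • e1)) volume volume := by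
    have h1 : MeasurePreserving (fun x : ℝ × ℝ =>
        (MeasurableEquiv.toLp 2 (Fin 2 → ℝ)) ((MeasurableEquiv.finTwoArrow).symm x))
        volume volume :=
      ((EuclideanSpace.volume_preserving_symm_measurableEquiv_toLp (Fin 2)).symm).comp
        (volume_preserving_finTwoArrow ℝ).symm
    have h2 := ((ρ.measurePreserving).comp h1).comp
      (Measure.measurePreserving_swap (μ := (volume : Measure ℝ)) (ν := (volume : Measure ℝ)))
    have heq : (fun p : ℝ × ℝ => ρ (p.2 • e0 + p.1 • e1)) =
        ((fun y : EuclideanSpace ℝ (Fin 2) => ρ y) ∘ fun x : ℝ × ℝ =>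
          (MeasurableEquiv.toLp 2 (Fin 2 → ℝ)) ((MeasurableEquiv.finTwoArrow).symm x)) ∘
          Prod.swap := by
      funext p
      simp only [Function.comp_apply]
      congr 1
      ext i
      fin_cases i <;>
        simp [MeasurableEquiv.coe_toLp, MeasurableEquiv.finTwoArrow,
          EuclideanSpace.single_apply, he0, he1]
    rw [heq]
    exact h2
  -- Step 3: pull back the tiling along ψ
  have key : ∀ᵐ p : ℝ × ℝ,
      ∑' n : ℤ, S.indicator (fun _ => (1 : ENNReal)) (ρ ((p.2 - n) • e0 + p.1 • e1)) = 1 := by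
    filter_upwards [hmp.quasiMeasurePreserving.ae htileE] with p hp
    refine Eq.trans (tsum_congr fun n => ?_) hp
    have hv : ρ (p.2 • e0 + p.1 • e1) - ρ ((n : ℝ) • e0) = ρ ((p.2 - n) • e0 + p.1 • e1) := by
      rw [← ρ.map_sub]
      congr 1
      module
    rw [hv]
  rw [Measure.volume_eq_prod] at key
  filter_upwards [Measure.ae_ae_of_ae_prod key] with t ht
  -- now t is fixed
  set A : Set ℝ := {s : ℝ | ρ (s • e0 + t • e1) ∈ S} with hAdef
  have hAm : MeasurableSet A := by
    have hc : Continuous fun s : ℝ => ρ (s • e0 + t • e1) := by fun_prop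
    exact hc.measurable hS
  -- pointwise identity a.e. in s
  have hpt : ∀ᵐ s : ℝ, ∑' n : ℤ, A.indicator (fun _ => (1 : ENNReal)) (s + n) = 1 := by
    filter_upwards [ht] with s hs
    refine Eq.trans ?_ hs
    rw [← (Equiv.neg ℤ).tsum_eq (fun n : ℤ => A.indicator (fun _ => (1 : ENNReal)) (s + n))]
    refine tsum_congr fun n => ?_
    simp only [Equiv.neg_apply]
    have hx : (s + ((-n : ℤ) : ℝ)) = s - (n : ℝ) := by push_cast; ring
    rw [hx]
    by_cases h : ρ ((s - (n : ℝ)) • e0 + t • e1) ∈ S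
    · rw [Set.indicator_of_mem (show s - (n : ℝ) ∈ A from h), Set.indicator_of_mem h]
    · rw [Set.indicator_of_notMem (show s - (n : ℝ) ∉ A from h), Set.indicator_of_notMem h]
  -- now compute volume A
  have hcover : (⋃ n : ℤ, Set.Ioc ((n : ℝ)) (n + 1)) = Set.univ := by
    ext x
    simp only [Set.mem_iUnion, Set.mem_Ioc, Set.mem_univ, iff_true]
    refine ⟨⌈x⌉ - 1, ?_, ?_⟩
    · push_cast
      linarith [Int.ceil_lt_add_one x]
    · push_cast
      linarith [Int.le_ceil x]
  have hsplit : volume A = ∑' n : ℤ, volume (A ∩ Set.Ioc ((n : ℝ)) (n + 1)) := by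
    rw [← measure_iUnion (fun m n hmn => ((Set.pairwise_disjoint_Ioc_intCast (α := ℝ)) hmn).mono
        Set.inter_subset_right Set.inter_subset_right)
        (fun n => hAm.inter measurableSet_Ioc)]
    rw [← Set.inter_iUnion, hcover, Set.inter_univ]
  have hterm : ∀ n : ℤ, volume (A ∩ Set.Ioc ((n : ℝ)) (n + 1)) =
      ∫⁻ s in Set.Ioc (0 : ℝ) 1, A.indicator (fun _ => (1 : ENNReal)) (s + n) := by
    intro n
    have hBm : MeasurableSet ((fun s : ℝ => s + (n : ℝ)) ⁻¹' A) :=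
      measurable_add_const (n : ℝ) hAm
    have h1 : volume (A ∩ Set.Ioc ((n : ℝ)) (n + 1)) =
        volume (((fun s : ℝ => s + (n : ℝ)) ⁻¹' A) ∩ Set.Ioc (0 : ℝ) 1) := by
      rw [← measure_preimage_add_right volume (n : ℝ) (A ∩ Set.Ioc ((n : ℝ)) (n + 1))]
      congr 1
      ext s
      simp only [Set.mem_preimage, Set.mem_inter_iff, Set.mem_Ioc]
      constructor
      · rintro ⟨h1, h2, h3⟩; exact ⟨h1, by linarith, by linarith⟩
      · rintro ⟨h1, h2, h3⟩; exact ⟨h1, by linarith, by linarith⟩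
    rw [h1]
    have h2 : ∫⁻ s in Set.Ioc (0 : ℝ) 1, A.indicator (fun _ => (1 : ENNReal)) (s + n)
        = ∫⁻ s in Set.Ioc (0 : ℝ) 1,
          ((fun s : ℝ => s + (n : ℝ)) ⁻¹' A).indicator (fun _ => (1 : ENNReal)) s := by
      refine lintegral_congr fun s => ?_
      by_cases h : s + (n : ℝ) ∈ A
      · rw [Set.indicator_of_mem h]
        simp [Set.indicator_apply, Set.mem_preimage, h]
      · rw [Set.indicator_of_notMem h]
        simp [Set.indicator_apply, Set.mem_preimage, h]
    rw [h2, lintegral_indicator_const hBm, one_mul, Measure.restrict_apply hBm]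
  calc volume A = ∑' n : ℤ, ∫⁻ s in Set.Ioc (0 : ℝ) 1,
        A.indicator (fun _ => (1 : ENNReal)) (s + n) := by
        rw [hsplit]; exact tsum_congr hterm
    _ = ∫⁻ s in Set.Ioc (0 : ℝ) 1, ∑' n : ℤ, A.indicator (fun _ => (1 : ENNReal)) (s + n) := by
        refine (lintegral_tsum fun n => ?_).symm
        exact ((measurable_const.indicator hAm).comp (measurable_add_const (n : ℝ))).aemeasurable
    _ = ∫⁻ _ in Set.Ioc (0 : ℝ) 1, (1 : ENNReal) := by
        refine lintegral_congr_ae ?_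
        exact ae_restrict_of_ae hpt
    _ = 1 := by simp [Real.volume_Ioc]
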